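/- Let A be a real d' × d matrix with full column rank, let Σ be a symmetric positive definite real d × d matrix, let m ≤ d, and let H⊥ be a real d' × d' matrix that is symmetric and idempotent (H⊥ᵀ = H⊥ and H⊥² = H⊥) whose column space equals the orthogonal complement in ℝ^{d'} of the span of the first m columns of A. Then the matrix H⊥ A Σ Aᵀ H⊥ has rank exactly d − m. -/

import Mathlib

open Matrix Module Submodule LinearMap
open scoped MatrixOrder

set_option synthInstance.maxHeartbeats 1000000
set_option maxHeartbeats 1000000

/-- If `A` has full column rank, `S` is symmetric positive definite, and
`H` is the orthogonal projector onto the orthocomplement of the span of the first `m`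
columns of `A`, then `rank (H A S Aᵀ H) = d - m`. -/
theorem stmt5 (d' d m : ℕ) (hm : m ≤ d)
    (A : Matrix (Fin d') (Fin d) ℝ)
    (hA : LinearIndependent ℝ (fun j : Fin d => fun i : Fin d' => A i j))
    (S : Matrix (Fin d) (Fin d) ℝ) (hS : S.PosDef)
    (H : Matrix (Fin d') (Fin d') ℝ) (hsymm : H.IsSymm) (hidem : H * H = H)
    (hrange : ∀ x : Fin d' → ℝ,
      (∃ y : Fin d' → ℝ, H *ᵥ y = x) ↔
        ∀ j : Fin m, x ⬝ᵥ (fun i : Fin d' => A i (Fin.castLE hm j)) = 0) :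
    (H * A * S * Aᵀ * H).rank = d - m := by
  classical
  set v : Fin m → (Fin d' → ℝ) := fun j i => A i (Fin.castLE hm j) with hv
  have hvli : LinearIndependent ℝ v := hA.comp _ (Fin.strictMono_castLE hm).injective
  set W : Submodule ℝ (Fin d' → ℝ) := Submodule.span ℝ (Set.range v) with hW
  have hdim : finrank ℝ (Fin d' → ℝ) = d' := by simp
  -- `H` annihilates each of the first `m` columns of `A`
  have hHv : ∀ j, H *ᵥ v j = 0 := by
    intro j
    have key : ∀ x : Fin d' → ℝ, x ⬝ᵥ (H *ᵥ v j) = 0 := by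
      intro x
      have h1 : (H *ᵥ x) ⬝ᵥ v j = 0 := (hrange (H *ᵥ x)).1 ⟨x, rfl⟩ j
      calc x ⬝ᵥ (H *ᵥ v j) = (x ᵥ* H) ⬝ᵥ v j := dotProduct_mulVec x H (v j)
        _ = (H *ᵥ x) ⬝ᵥ v j := by rw [← mulVec_transpose, hsymm.eq]
        _ = 0 := h1
    have := key (H *ᵥ v j)
    rwa [dotProduct_self_eq_zero] at this
  -- the matrix `B` whose rows are the first `m` columns of `A`
  set B : Matrix (Fin m) (Fin d') ℝ := Matrix.of v with hB
  have hBrank : finrank ℝ (LinearMap.range B.mulVecLin) = m := by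
    have : B.rank = m := by
      rw [← Matrix.rank_transpose]
      have hinj : Function.Injective Bᵀ.mulVec := by
        rw [Matrix.mulVec_injective_iff]
        simpa [hB] using hvli
      have hinj' : Function.Injective Bᵀ.mulVecLin := hinj
      have h1 := LinearMap.finrank_range_add_finrank_ker Bᵀ.mulVecLin
      rw [LinearMap.ker_eq_bot.mpr hinj', finrank_bot, add_zero] at h1
      rw [Matrix.rank, h1]
      simp
    exact this
  -- the range of `H` is the kernel of `B`
  have hrangeH : LinearMap.range H.mulVecLin = LinearMap.ker B.mulVecLin := by
    ext x
    simp only [LinearMap.mem_range, LinearMap.mem_ker, mulVecLin_apply]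
    rw [hrange x]
    constructor
    · intro h; ext j
      have := h j
      rw [dotProduct_comm] at this
      simpa [hB, mulVec, dotProduct] using this
    · intro h j
      rw [dotProduct_comm]
      have := congr_fun h j
      simpa [hB, mulVec, dotProduct] using this
  have hrankH : finrank ℝ (LinearMap.range H.mulVecLin) = d' - m := by
    have h1 := LinearMap.finrank_range_add_finrank_ker B.mulVecLin
    rw [hBrank, hdim] at h1
    rw [hrangeH]
    have h2 : finrank ℝ (LinearMap.ker B.mulVecLin) ≤ d' := by
      have := Submodule.finrank_le (LinearMap.ker B.mulVecLin)
      rwa [hdim] at this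
    omega
  have hkerH : finrank ℝ (LinearMap.ker H.mulVecLin) = m := by
    have h1 := LinearMap.finrank_range_add_finrank_ker H.mulVecLin
    rw [hrankH, hdim] at h1
    have h2 : finrank ℝ (LinearMap.ker H.mulVecLin) ≤ d' := by
      have := Submodule.finrank_le (LinearMap.ker H.mulVecLin)
      rwa [hdim] at this
    have h3 : m ≤ d' := by
      have := hvli.fintype_card_le_finrank
      simpa [hdim] using this
    omega
  -- the kernel of `H` is exactly the span `W` of the first `m` columns of `A`
  have hWle : W ≤ LinearMap.ker H.mulVecLin := by
    rw [hW, Submodule.span_le]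
    rintro x ⟨j, rfl⟩
    simpa [LinearMap.mem_ker] using hHv j
  have hWfin : finrank ℝ W = m := by
    rw [hW, finrank_span_eq_card hvli]; simp
  have hWker : W = LinearMap.ker H.mulVecLin :=
    Submodule.eq_of_le_of_finrank_eq hWle (by rw [hWfin, hkerH])
  -- rank (H * A) = d - m, via rank-nullity for H restricted to the range of A
  set p : Submodule ℝ (Fin d' → ℝ) := LinearMap.range A.mulVecLin with hp
  have hpfin : finrank ℝ p = d := by
    have hinj : Function.Injective A.mulVec := by
      rw [Matrix.mulVec_injective_iff]
      exact hA
    have hinj' : Function.Injective A.mulVecLin := hinj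
    have h1 := LinearMap.finrank_range_add_finrank_ker A.mulVecLin
    rw [LinearMap.ker_eq_bot.mpr hinj', finrank_bot, add_zero] at h1
    rw [hp, h1]; simp
  have hWp : W ≤ p := by
    rw [hW, Submodule.span_le]
    rintro x ⟨j, rfl⟩
    refine ⟨Pi.single (Fin.castLE hm j) 1, ?_⟩
    rw [mulVecLin_apply, Matrix.mulVec_single_one]
    rfl
  set g : p →ₗ[ℝ] (Fin d' → ℝ) := H.mulVecLin.comp p.subtype with hg
  have hrg : LinearMap.range g = LinearMap.range (H * A).mulVecLin := by
    rw [hg, LinearMap.range_comp, Submodule.range_subtype, Matrix.mulVecLin_mul,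
      LinearMap.range_comp]
  have hkg : finrank ℝ (LinearMap.ker g) = m := by
    have hk : LinearMap.ker g = Submodule.comap p.subtype W := by
      rw [hg, LinearMap.ker_comp, hWker]
    rw [hk, (Submodule.comapSubtypeEquivOfLe hWp).finrank_eq, hWfin]
  have hHA : (H * A).rank = d - m := by
    have h1 := LinearMap.finrank_range_add_finrank_ker g
    rw [hrg, hkg, hpfin] at h1
    rw [Matrix.rank]
    omega
  -- reduce the full product to `H * A` using the positive-definite square root of `S`
  set C := CFC.sqrt S with hC
  have hCt : Cᵀ = C := by
    rw [← Matrix.conjTranspose_eq_transpose_of_trivial]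
    exact (CFC.sqrt_nonneg S).posSemidef.1
  have hCC : C * C = S := CFC.sqrt_mul_sqrt_self S hS.posSemidef.nonneg
  have hCdet : IsUnit C.det := by
    have hdet : S.det = C.det * C.det := by rw [← hCC, Matrix.det_mul]
    have h0 : S.det ≠ 0 := ne_of_gt hS.det_pos
    rw [hdet] at h0
    exact isUnit_iff_ne_zero.mpr (fun h => h0 (by rw [h, zero_mul]))
  have hfact : H * A * S * Aᵀ * H = (H * A * C) * (H * A * C)ᵀ := by
    rw [Matrix.transpose_mul, Matrix.transpose_mul, hCt, hsymm.eq, ← hCC]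
    simp only [Matrix.mul_assoc]
  rw [hfact, Matrix.rank_self_mul_transpose, Matrix.rank_mul_eq_left_of_isUnit_det _ _ hCdet,
    hHA]
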